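/- Assume F ∈ PSAP_{ω,r}(C,X) and there exists a bounded continuous function L_F : [0,∞) → ℝ⁺ such that ‖F(t,ψ₁) − F(t,ψ₂)‖ ≤ L_F(t)‖ψ₁ − ψ₂‖_C for all t ∈ [0,∞) and ψ₁, ψ₂ ∈ C. If u ∈ C_b([−r,∞),X) and the restriction of u to [0,∞) belongs to PSAP_{ω,r}(X), then the function s ↦ F(s, u_s) belongs to PSAP_{ω,r}(X). -/

import Mathlib

open MeasureTheory Filter Set

section PSAPhelpers

lemma myBiSup_le {α : Type*} {f : α → ℝ} {s : Set α} {M : ℝ} (hM : 0 ≤ M)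
    (h : ∀ τ ∈ s, f τ ≤ M) : (⨆ τ ∈ s, f τ) ≤ M := by
  refine Real.iSup_le (fun τ => ?_) hM
  by_cases hτ : τ ∈ s
  · rw [ciSup_pos hτ]; exact h τ hτ
  · haveI : IsEmpty (τ ∈ s) := ⟨hτ⟩
    rw [Real.iSup_of_isEmpty]; exact hM

lemma le_myBiSup {α : Type*} {f : α → ℝ} {s : Set α} {M : ℝ} {τ₀ : α}
    (hub : ∀ τ ∈ s, f τ ≤ M) (hτ : τ₀ ∈ s) : f τ₀ ≤ ⨆ τ ∈ s, f τ := by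
  have hbdd : BddAbove (Set.range fun τ => ⨆ _ : τ ∈ s, f τ) := by
    refine ⟨max M 0, ?_⟩
    rintro y ⟨τ, rfl⟩
    by_cases h : τ ∈ s
    · show (⨆ _ : τ ∈ s, f τ) ≤ max M 0
      rw [ciSup_pos h]; exact le_max_of_le_left (hub τ h)
    · haveI : IsEmpty (τ ∈ s) := ⟨h⟩
      show (⨆ _ : τ ∈ s, f τ) ≤ max M 0
      rw [Real.iSup_of_isEmpty]; exact le_max_right _ _
  calc f τ₀ = ⨆ _ : τ₀ ∈ s, f τ₀ := by rw [ciSup_pos hτ]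
    _ ≤ ⨆ τ ∈ s, f τ := le_ciSup hbdd τ₀

lemma cont_bdd_on (f : ℝ → ℝ) (hf : Continuous f) (a b : ℝ) :
    ∃ M, ∀ τ ∈ Icc a b, f τ ≤ M := by
  obtain ⟨M, hM⟩ := (isCompact_Icc (a := a) (b := b)).bddAbove_image hf.continuousOn
  exact ⟨M, fun τ hτ => hM (mem_image_of_mem f hτ)⟩

noncomputable def msup (f : ℝ → ℝ) (r s : ℝ) : ℝ := ⨆ τ ∈ Set.Icc (s - r) s, f τ

lemma le_msup' {f g : ℝ → ℝ} (hg : Continuous g) (hfg : ∀ τ, f τ ≤ g τ) {r s τ₀ : ℝ}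
    (hτ : τ₀ ∈ Icc (s - r) s) : f τ₀ ≤ msup f r s := by
  obtain ⟨M, hM⟩ := cont_bdd_on g hg (s - r) s
  exact le_myBiSup (fun τ hτ' => (hfg τ).trans (hM τ hτ')) hτ

lemma msup_nonneg {f : ℝ → ℝ} (hf : Continuous f) (hf0 : ∀ τ, 0 ≤ f τ) {r : ℝ}
    (hr : 0 ≤ r) (s : ℝ) : 0 ≤ msup f r s :=
  (hf0 s).trans (le_msup' hf (fun _ => le_rfl) ⟨by linarith, le_rfl⟩)

lemma continuous_msup {f : ℝ → ℝ} (hf : Continuous f) (hf0 : ∀ τ, 0 ≤ f τ) {r : ℝ}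
    (hr : 0 < r) : Continuous (msup f r) := by
  rw [Metric.continuous_iff]
  intro s₀ ε hε
  have hK : IsCompact (Icc (s₀ - r - 1) (s₀ + 1)) := isCompact_Icc
  have huc := hK.uniformContinuousOn_of_continuous hf.continuousOn
  rw [Metric.uniformContinuousOn_iff] at huc
  obtain ⟨δ, hδ, hmod⟩ := huc (ε / 2) (by linarith)
  have key : ∀ a b : ℝ, dist a s₀ ≤ 1 → dist b s₀ ≤ 1 → dist a b < δ →
      msup f r a ≤ msup f r b + ε / 2 := by
    intro a b ha hb hab
    obtain ⟨M, hM⟩ := cont_bdd_on f hf (b - r) b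
    have h0b : 0 ≤ msup f r b := msup_nonneg hf hf0 hr.le b
    refine myBiSup_le (by linarith) (fun τ hτ => ?_)
    rw [Real.dist_eq, abs_le] at ha hb
    rw [Real.dist_eq] at hab
    set τ' := max (b - r) (min b τ) with hτ'def
    have hτ'mem : τ' ∈ Icc (b - r) b :=
      ⟨le_max_left _ _, max_le (by linarith) (min_le_left _ _)⟩
    have habs : |τ - τ'| ≤ |a - b| := by
      have h1 := hτ.1; have h2 := hτ.2
      have hab1 : a - b ≤ |a - b| := le_abs_self _
      have hab2 : b - a ≤ |a - b| := by rw [abs_sub_comm]; exact le_abs_self _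
      rcases le_total τ b with h | h
      · rw [min_eq_right h] at hτ'def
        rcases le_total (b - r) τ with h' | h'
        · rw [hτ'def, max_eq_right h']; simpa using abs_nonneg (a - b)
        · rw [hτ'def, max_eq_left h', abs_le]; constructor <;> linarith
      · rw [min_eq_left h] at hτ'def
        rw [hτ'def, max_eq_right (by linarith : b - r ≤ b), abs_le]
        constructor <;> linarith
    have hτK : τ ∈ Icc (s₀ - r - 1) (s₀ + 1) := ⟨by linarith [hτ.1], by linarith [hτ.2]⟩
    have hτ'K : τ' ∈ Icc (s₀ - r - 1) (s₀ + 1) :=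
      ⟨by linarith [hτ'mem.1], by linarith [hτ'mem.2]⟩
    have hd : dist τ τ' < δ := by rw [Real.dist_eq]; exact lt_of_le_of_lt habs hab
    have hff := hmod τ hτK τ' hτ'K hd
    rw [Real.dist_eq, abs_lt] at hff
    have : f τ' ≤ msup f r b := le_myBiSup hM hτ'mem
    linarith [hff.1]
  refine ⟨min δ 1, by positivity, fun s hs => ?_⟩
  have h1l : dist s s₀ ≤ 1 := le_of_lt (lt_of_lt_of_le hs (min_le_right _ _))
  have hδl : dist s s₀ < δ := lt_of_lt_of_le hs (min_le_left _ _)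
  have h1 := key s s₀ h1l (by simp) hδl
  have h2 := key s₀ s (by simp) h1l (by rwa [dist_comm])
  rw [Real.dist_eq, abs_lt]
  constructor <;> linarith

end PSAPhelpers

/-- `v ∈ PSAP_{ω,r}(Y)`: pseudo S-asymptotically ω-periodic of class r. -/
def PSAPclass {Y : Type*} [NormedAddCommGroup Y] (ω r : ℝ) (v : ℝ → Y) : Prop :=
  Tendsto (fun T : ℝ => (1 / T) * ∫ s in r..T, ⨆ τ ∈ Set.Icc (s - r) s, ‖v (τ + ω) - v τ‖)
    atTop (nhds 0)

/-- `F ∈ PSAP_{ω,r}(E,Y)`: uniformly pseudo S-asymptotically ω-periodic of class r. -/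
def PSAPunif {E Y : Type*} [NormedAddCommGroup E] [NormedAddCommGroup Y] (ω r : ℝ)
    (F : ℝ → E → Y) : Prop :=
  ∀ L > 0, Tendsto (fun T : ℝ => (1 / T) * ∫ s in r..T,
      ⨆ τ ∈ Set.Icc (s - r) s, ⨆ x ∈ {x : E | ‖x‖ ≤ L}, ‖F (τ + ω) x - F τ x‖)
    atTop (nhds 0)

/-- The history `u_t ∈ C([−r,0],X)`, `u_t(θ) = u(t+θ)`. -/
noncomputable def hist {X : Type*} [NormedAddCommGroup X] (r : ℝ) (u : ℝ → X) (t : ℝ) :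
    C(Set.Icc (-r) (0:ℝ), X) := by
  classical
  exact if h : Continuous (fun θ : Set.Icc (-r) (0:ℝ) => u (t + ↑θ)) then ⟨_, h⟩ else 0

/-- Lemma 2.4: if `F ∈ PSAP_{ω,r}(C,X)` is Lipschitz with a bounded
continuous coefficient `L_F`, and `u ∈ C_b([−r,∞),X)` with `u|_{[0,∞)} ∈ PSAP_{ω,r}(X)`,
then `s ↦ F(s,u_s)` belongs to `PSAP_{ω,r}(X)`. -/
theorem psapClass_comp_lipschitz {X : Type*} [NormedAddCommGroup X] [NormedSpace ℝ X]
    (r ω : ℝ) (hr : 0 < r) (hω : 0 < ω)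
    (F : ℝ → C(Set.Icc (-r) (0:ℝ), X) → X)
    (hFcont : ContinuousOn (fun p : ℝ × C(Set.Icc (-r) (0:ℝ), X) => F p.1 p.2)
      (Set.Ici 0 ×ˢ Set.univ))
    (hFP : PSAPunif ω r F)
    (LF : ℝ → ℝ)
    (hLFcont : ContinuousOn LF (Set.Ici 0))
    (hLFpos : ∀ t ≥ (0:ℝ), 0 ≤ LF t)
    (hLFbdd : ∃ B, ∀ t ≥ (0:ℝ), LF t ≤ B)
    (hLip : ∀ t ≥ (0:ℝ), ∀ ψ₁ ψ₂ : C(Set.Icc (-r) (0:ℝ), X),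
      ‖F t ψ₁ - F t ψ₂‖ ≤ LF t * ‖ψ₁ - ψ₂‖)
    (u : ℝ → X)
    (hucont : ContinuousOn u (Set.Ici (-r)))
    (hubdd : ∃ B, ∀ t ≥ -r, ‖u t‖ ≤ B)
    (huP : PSAPclass ω r u) :
    PSAPclass ω r (fun s => F s (hist r u s)) := by
  classical
  obtain ⟨L₀, hL₀⟩ := hubdd
  obtain ⟨B₀, hB₀⟩ := hLFbdd
  set L : ℝ := max L₀ 1 with hLdef
  have hL : 0 < L := lt_of_lt_of_le one_pos (le_max_right _ _)
  set B : ℝ := max B₀ 0 with hBdef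
  have hB : 0 ≤ B := le_max_right _ _
  have hLFB : ∀ t ≥ (0:ℝ), LF t ≤ B := fun t ht => (hB₀ t ht).trans (le_max_left _ _)
  -- modified u
  set v : ℝ → X := fun t => u (max t (-r)) with hvdef
  have hvcont : Continuous v :=
    hucont.comp_continuous (continuous_id.max continuous_const) (fun t => mem_Ici.2 (le_max_right _ _))
  have hvu : ∀ t, -r ≤ t → v t = u t := fun t ht => by simp only [hvdef, max_eq_left ht]
  have hvbdd : ∀ t, ‖v t‖ ≤ L := fun t => (hL₀ _ (le_max_right _ _)).trans (le_max_left _ _)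
  -- modified F
  set Fv : ℝ → C(Set.Icc (-r) (0:ℝ), X) → X := fun t ψ => F (max t 0) ψ with hFvdef
  have hFvF : ∀ t, 0 ≤ t → Fv t = F t := fun t ht => funext fun ψ => by
    simp only [hFvdef, max_eq_left ht]
  have hFvcont : Continuous (fun p : ℝ × C(Set.Icc (-r) (0:ℝ), X) => Fv p.1 p.2) := by
    have heq : (fun p : ℝ × C(Set.Icc (-r) (0:ℝ), X) => Fv p.1 p.2)
        = (fun p : ℝ × C(Set.Icc (-r) (0:ℝ), X) => F p.1 p.2) ∘ (fun p => (max p.1 0, p.2)) :=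
      rfl
    rw [heq]
    exact hFcont.comp_continuous
      ((continuous_fst.max continuous_const).prodMk continuous_snd)
      (fun p => ⟨mem_Ici.2 (le_max_right _ _), mem_univ _⟩)
  have hFvLip : ∀ t (ψ₁ ψ₂ : C(Set.Icc (-r) (0:ℝ), X)), ‖Fv t ψ₁ - Fv t ψ₂‖ ≤ B * ‖ψ₁ - ψ₂‖ :=
    fun t ψ₁ ψ₂ => (hLip _ (le_max_right _ _) _ _).trans
      (mul_le_mul_of_nonneg_right (hLFB _ (le_max_right _ _)) (norm_nonneg _))
  -- the (modified) history map, continuous into C([-r,0],X)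
  haveI hne : Nonempty (Set.Icc (-r) (0:ℝ)) := ⟨⟨0, by constructor <;> linarith⟩⟩
  set Hmap : C(ℝ × (Set.Icc (-r) (0:ℝ)), X) :=
    ⟨fun p => v (p.1 + ↑p.2), by fun_prop⟩ with hHmapdef
  set H : ℝ → C(Set.Icc (-r) (0:ℝ), X) := fun t => ContinuousMap.curry Hmap t with hHdef
  have hHcont : Continuous H := (ContinuousMap.curry Hmap).continuous
  have hHapp : ∀ (t : ℝ) (θ : Set.Icc (-r) (0:ℝ)), H t θ = v (t + ↑θ) := fun t θ => rfl
  have hhist : ∀ t, 0 ≤ t → hist r u t = H t := by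
    intro t ht
    have hc : Continuous (fun θ : Set.Icc (-r) (0:ℝ) => u (t + ↑θ)) := by
      refine hucont.comp_continuous (by fun_prop) (fun θ => ?_)
      have := θ.2.1
      simp only [mem_Ici]; linarith
    rw [hist, dif_pos hc]
    ext θ
    have h1 : -r ≤ t + ↑θ := by have := θ.2.1; linarith
    exact (hvu _ h1).symm.trans (hHapp t θ).symm
  -- the continuous comparison functions
  set Φ : ℝ → ℝ := fun τ => ‖Fv (τ + ω) (H (τ + ω)) - Fv τ (H τ)‖ with hΦdef
  have hc1 : Continuous fun τ : ℝ => Fv (τ + ω) (H (τ + ω)) :=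
    hFvcont.comp ((continuous_id.add continuous_const).prodMk
      (hHcont.comp (continuous_id.add continuous_const)))
  have hc2 : Continuous fun τ : ℝ => Fv τ (H τ) :=
    hFvcont.comp (continuous_id.prodMk hHcont)
  have hΦcont : Continuous Φ := (hc1.sub hc2).norm
  have hΦ0 : ∀ τ, 0 ≤ Φ τ := fun τ => norm_nonneg _
  set c : ℝ → ℝ := fun σ => ‖v (σ + ω) - v σ‖ with hcdef
  have hccont : Continuous c :=
    ((hvcont.comp (continuous_id.add continuous_const)).sub hvcont).norm
  have hc0 : ∀ σ, 0 ≤ c σ := fun σ => norm_nonneg _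
  set q : ℝ → ℝ := fun τ =>
    ⨆ x ∈ {x : C(Set.Icc (-r) (0:ℝ), X) | ‖x‖ ≤ L}, ‖Fv (τ + ω) x - Fv τ x‖ with hqdef
  set Mq : ℝ → ℝ := fun τ => ‖Fv (τ + ω) 0 - Fv τ 0‖ + 2 * B * L with hMqdef
  have hMqcont : Continuous Mq := by
    have hc3 : Continuous fun τ : ℝ => Fv (τ + ω) (0 : C(Set.Icc (-r) (0:ℝ), X)) :=
      hFvcont.comp ((continuous_id.add continuous_const).prodMk continuous_const)
    have hc4 : Continuous fun τ : ℝ => Fv τ (0 : C(Set.Icc (-r) (0:ℝ), X)) :=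
      hFvcont.comp (continuous_id.prodMk continuous_const)
    exact ((hc3.sub hc4).norm).add continuous_const
  have hMq0 : ∀ τ, 0 ≤ Mq τ := fun τ => add_nonneg (norm_nonneg _) (by positivity)
  have hqub : ∀ τ, ∀ x ∈ {x : C(Set.Icc (-r) (0:ℝ), X) | ‖x‖ ≤ L},
      ‖Fv (τ + ω) x - Fv τ x‖ ≤ Mq τ := by
    intro τ x hx
    have hx' : ‖x‖ ≤ L := hx
    have t1 : ‖Fv (τ + ω) x - Fv (τ + ω) 0‖ ≤ B * L :=
      (hFvLip _ _ _).trans (by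
        rw [sub_zero]
        exact mul_le_mul_of_nonneg_left hx' hB)
    have t2 : ‖Fv τ 0 - Fv τ x‖ ≤ B * L :=
      (hFvLip _ _ _).trans (by
        rw [zero_sub, norm_neg]
        exact mul_le_mul_of_nonneg_left hx' hB)
    have tri : ‖Fv (τ + ω) x - Fv τ x‖ ≤
        ‖Fv (τ + ω) x - Fv (τ + ω) 0‖ + ‖Fv (τ + ω) 0 - Fv τ 0‖ + ‖Fv τ 0 - Fv τ x‖ := by
      have := dist_triangle4 (Fv (τ + ω) x) (Fv (τ + ω) 0) (Fv τ 0) (Fv τ x)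
      simpa only [dist_eq_norm] using this
    simp only [hMqdef]
    linarith
  have hq0 : ∀ τ, 0 ≤ q τ := by
    intro τ
    refine (norm_nonneg (Fv (τ + ω) 0 - Fv τ 0)).trans (le_myBiSup (hqub τ) ?_)
    simp only [mem_setOf_eq, norm_zero]
    exact hL.le
  have hqle : ∀ τ, q τ ≤ Mq τ := fun τ => myBiSup_le (hMq0 τ) (hqub τ)
  have hA0 : ∀ s, 0 ≤ msup q r s := fun s =>
    (hq0 s).trans (le_msup' hMqcont hqle ⟨by linarith, le_rfl⟩)
  have hAW : ∀ s, msup q r s ≤ msup Mq r s := fun s =>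
    myBiSup_le (msup_nonneg hMqcont hMq0 hr.le s)
      (fun τ hτ => (hqle τ).trans (le_msup' hMqcont (fun _ => le_rfl) hτ))
  -- measurability of A := msup q r via lower semicontinuity
  have hAmeas : Measurable (msup q r) := by
    set ι := (Set.Icc (0:ℝ) 1) × {x : C(Set.Icc (-r) (0:ℝ), X) // ‖x‖ ≤ L} with hιdef
    haveI : Nonempty ι := ⟨⟨⟨0, by norm_num⟩, ⟨0, by simp [hL.le]⟩⟩⟩
    set R : ι → ℝ → ℝ := fun pp s =>
      ‖Fv (s - r + ↑pp.1 * r + ω) ↑pp.2 - Fv (s - r + ↑pp.1 * r) ↑pp.2‖ with hRdef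
    have hRcont : ∀ pp, Continuous (R pp) := by
      intro pp
      have haff : Continuous fun s : ℝ => s - r + ↑pp.1 * r := by fun_prop
      have e1 : Continuous fun s : ℝ => Fv (s - r + ↑pp.1 * r + ω) (↑pp.2 : C(Set.Icc (-r) (0:ℝ), X)) :=
        hFvcont.comp ((haff.add continuous_const).prodMk continuous_const)
      have e2 : Continuous fun s : ℝ => Fv (s - r + ↑pp.1 * r) (↑pp.2 : C(Set.Icc (-r) (0:ℝ), X)) :=
        hFvcont.comp (haff.prodMk continuous_const)
      exact (e1.sub e2).norm
    have hmemIcc : ∀ (s : ℝ) (pp : ι), s - r + ↑pp.1 * r ∈ Set.Icc (s - r) s := by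
      intro s pp
      have h1 : (0:ℝ) ≤ ↑pp.1 := pp.1.2.1
      have h2 : (↑pp.1 : ℝ) ≤ 1 := pp.1.2.2
      constructor
      · nlinarith
      · nlinarith
    have hRbdd : ∀ s, BddAbove (Set.range fun pp => R pp s) := by
      intro s
      obtain ⟨M, hM⟩ := cont_bdd_on Mq hMqcont (s - r) s
      refine ⟨M, ?_⟩
      rintro y ⟨pp, rfl⟩
      exact (hqub _ _ pp.2.2).trans (hM _ (hmemIcc s pp))
    have hAR : msup q r = fun s => ⨆ pp, R pp s := by
      funext s
      have hsup0 : 0 ≤ ⨆ pp, R pp s :=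
        (norm_nonneg _).trans (le_ciSup (hRbdd s) (Classical.arbitrary ι))
      refine le_antisymm ?_ ?_
      · refine myBiSup_le hsup0 (fun τ hτ => ?_)
        refine myBiSup_le hsup0 (fun x hx => ?_)
        have ht01 : (τ - (s - r)) / r ∈ Set.Icc (0:ℝ) 1 := by
          constructor
          · exact div_nonneg (by linarith [hτ.1]) hr.le
          · rw [div_le_one hr]
            linarith [hτ.2]
        set pp : ι := ⟨⟨(τ - (s - r)) / r, ht01⟩, ⟨x, hx⟩⟩ with hppdef
        have harg : s - r + ↑pp.1 * r = τ := by
          simp only [hppdef]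
          field_simp
          ring
        have : ‖Fv (τ + ω) x - Fv τ x‖ = R pp s := by rw [hRdef]; simp only [hppdef]; rw [harg]
        rw [this]
        exact le_ciSup (hRbdd s) pp
      · refine Real.iSup_le (fun pp => ?_) (hA0 s)
        have h1 : R pp s ≤ q (s - r + ↑pp.1 * r) := le_myBiSup (hqub _) pp.2.2
        exact h1.trans (le_msup' hMqcont hqle (hmemIcc s pp))
    rw [hAR]
    exact (lowerSemicontinuous_ciSup hRbdd
      (fun pp => (hRcont pp).lowerSemicontinuous)).measurable
  -- pointwise bound: Φ τ ≤ q τ + B * msup c r τ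
  have hHnorm : ∀ t, ‖H t‖ ≤ L := by
    intro t
    rw [ContinuousMap.norm_le _ hL.le]
    intro θ
    rw [hHapp]
    exact hvbdd _
  have hkey : ∀ τ, Φ τ ≤ q τ + B * msup c r τ := by
    intro τ
    have h1 : ‖Fv (τ + ω) (H (τ + ω)) - Fv τ (H (τ + ω))‖ ≤ q τ :=
      le_myBiSup (hqub τ) (hHnorm (τ + ω))
    have h2 : ‖Fv τ (H (τ + ω)) - Fv τ (H τ)‖ ≤ B * msup c r τ := by
      refine (hFvLip τ _ _).trans (mul_le_mul_of_nonneg_left ?_ hB)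
      rw [ContinuousMap.norm_le _ (msup_nonneg hccont hc0 hr.le τ)]
      intro θ
      have heq : (H (τ + ω) - H τ) θ = v (τ + ↑θ + ω) - v (τ + ↑θ) := by
        rw [ContinuousMap.sub_apply, hHapp, hHapp]
        ring_nf
      rw [heq]
      exact le_msup' hccont (fun _ => le_rfl) ⟨by linarith [θ.2.1], by linarith [θ.2.2]⟩
    have tri : Φ τ ≤ ‖Fv (τ + ω) (H (τ + ω)) - Fv τ (H (τ + ω))‖
        + ‖Fv τ (H (τ + ω)) - Fv τ (H τ)‖ := by
      have := dist_triangle (Fv (τ + ω) (H (τ + ω))) (Fv τ (H (τ + ω))) (Fv τ (H τ))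
      simpa only [dist_eq_norm] using this
    linarith
  -- double sup collapse
  have hp0 : ∀ s, 0 ≤ msup c r s := msup_nonneg hccont hc0 hr.le
  have hcollapse : ∀ s, msup Φ r s ≤ msup q r s + B * (msup c r s + msup c r (s - r)) := by
    intro s
    have hRHS0 : 0 ≤ msup q r s + B * (msup c r s + msup c r (s - r)) := by
      have := hp0 s; have := hp0 (s - r); have := hA0 s
      positivity
    refine myBiSup_le hRHS0 (fun τ hτ => ?_)
    refine (hkey τ).trans (add_le_add (le_msup' hMqcont hqle hτ)
      (mul_le_mul_of_nonneg_left ?_ hB))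
    refine myBiSup_le (add_nonneg (hp0 s) (hp0 (s - r))) (fun σ hσ => ?_)
    rcases le_total σ (s - r) with h | h
    · have hmem : σ ∈ Set.Icc ((s - r) - r) (s - r) := ⟨by linarith [hσ.1, hτ.1], h⟩
      have := le_msup' hccont (fun _ => le_rfl) hmem
      linarith [hp0 s]
    · have hmem : σ ∈ Set.Icc (s - r) s := ⟨h, by linarith [hσ.2, hτ.2]⟩
      have := le_msup' hccont (fun _ => le_rfl) hmem
      linarith [hp0 (s - r)]
  -- integrand identifications
  have hG0eq : ∀ s, r ≤ s →
      (⨆ τ ∈ Set.Icc (s - r) s, ‖F (τ + ω) (hist r u (τ + ω)) - F τ (hist r u τ)‖)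
        = msup Φ r s := by
    intro s hs
    rw [msup]
    congr 1
    funext τ
    by_cases hτ : τ ∈ Set.Icc (s - r) s
    · rw [ciSup_pos hτ, ciSup_pos hτ]
      have ht0 : (0:ℝ) ≤ τ := by linarith [hτ.1]
      simp only [hΦdef]
      rw [hhist τ ht0, hhist (τ + ω) (by linarith), hFvF τ ht0, hFvF (τ + ω) (by linarith)]
    · haveI : IsEmpty (τ ∈ Set.Icc (s - r) s) := ⟨hτ⟩
      rw [Real.iSup_of_isEmpty, Real.iSup_of_isEmpty]
  have hAeq : ∀ s, r ≤ s →
      (⨆ τ ∈ Set.Icc (s - r) s,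
        ⨆ x ∈ {x : C(Set.Icc (-r) (0:ℝ), X) | ‖x‖ ≤ L}, ‖F (τ + ω) x - F τ x‖)
        = msup q r s := by
    intro s hs
    rw [msup]
    congr 1
    funext τ
    by_cases hτ : τ ∈ Set.Icc (s - r) s
    · rw [ciSup_pos hτ, ciSup_pos hτ]
      have ht0 : (0:ℝ) ≤ τ := by linarith [hτ.1]
      simp only [hqdef]
      rw [hFvF τ ht0, hFvF (τ + ω) (by linarith)]
    · haveI : IsEmpty (τ ∈ Set.Icc (s - r) s) := ⟨hτ⟩
      rw [Real.iSup_of_isEmpty, Real.iSup_of_isEmpty]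
  have hceq : ∀ s, r ≤ s →
      (⨆ τ ∈ Set.Icc (s - r) s, ‖u (τ + ω) - u τ‖) = msup c r s := by
    intro s hs
    rw [msup]
    congr 1
    funext τ
    by_cases hτ : τ ∈ Set.Icc (s - r) s
    · rw [ciSup_pos hτ, ciSup_pos hτ]
      have ht0 : -r ≤ τ := by linarith [hτ.1]
      simp only [hcdef]
      rw [hvu τ ht0, hvu (τ + ω) (by linarith)]
    · haveI : IsEmpty (τ ∈ Set.Icc (s - r) s) := ⟨hτ⟩
      rw [Real.iSup_of_isEmpty, Real.iSup_of_isEmpty]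
  -- continuity and basic integral facts
  have hmsPhicont : Continuous (msup Φ r) := continuous_msup hΦcont hΦ0 hr
  have hmsccont : Continuous (msup c r) := continuous_msup hccont hc0 hr
  have hmsPhi0 : ∀ s, 0 ≤ msup Φ r s := msup_nonneg hΦcont hΦ0 hr.le
  set C₀ : ℝ := ∫ s in (0:ℝ)..r, msup c r s with hC0def
  -- integrability of msup q r on [r,T]
  have hiA : ∀ T, r ≤ T → IntervalIntegrable (msup q r) volume r T := by
    intro T hT
    refine (intervalIntegrable_iff_integrableOn_Ioc_of_le hT).2 ?_
    have hWint : IntegrableOn (msup Mq r) (Set.Ioc r T) volume :=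
      ((continuous_msup hMqcont hMq0 hr).intervalIntegrable r T).1
    refine Integrable.mono hWint hAmeas.aestronglyMeasurable (ae_of_all _ (fun s => ?_))
    rw [Real.norm_eq_abs, Real.norm_eq_abs, abs_of_nonneg (hA0 s),
      abs_of_nonneg (msup_nonneg hMqcont hMq0 hr.le s)]
    exact hAW s
  -- the central integral bound
  have hIbound : ∀ T, r ≤ T → (∫ s in r..T, msup Φ r s) ≤
      (∫ s in r..T, msup q r s) + B * (∫ s in r..T, msup c r s)
        + B * (C₀ + ∫ s in r..T, msup c r s) := by
    intro T hT
    have hint1 : IntervalIntegrable (msup Φ r) volume r T := hmsPhicont.intervalIntegrable r T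
    have hintc : IntervalIntegrable (msup c r) volume r T := hmsccont.intervalIntegrable r T
    have hintcs : IntervalIntegrable (fun s => msup c r (s - r)) volume r T :=
      (hmsccont.comp (continuous_id.sub continuous_const)).intervalIntegrable r T
    have step1 : (∫ s in r..T, msup Φ r s) ≤
        ∫ s in r..T, (msup q r s + B * msup c r s + B * msup c r (s - r)) := by
      refine intervalIntegral.integral_mono_on hT hint1
        (((hiA T hT).add (hintc.const_mul B)).add (hintcs.const_mul B)) (fun s hs => ?_)
      have e : B * (msup c r s + msup c r (s - r)) = B * msup c r s + B * msup c r (s - r) := by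
        ring
      linarith [hcollapse s, e]
    have step2 : (∫ s in r..T, (msup q r s + B * msup c r s + B * msup c r (s - r)))
        = (∫ s in r..T, msup q r s) + B * (∫ s in r..T, msup c r s)
          + B * (∫ s in r..T, msup c r (s - r)) := by
      rw [intervalIntegral.integral_add ((hiA T hT).add (hintc.const_mul B))
        (hintcs.const_mul B),
        intervalIntegral.integral_add (hiA T hT) (hintc.const_mul B),
        intervalIntegral.integral_const_mul, intervalIntegral.integral_const_mul]
    have step3 : (∫ s in r..T, msup c r (s - r)) ≤ C₀ + ∫ s in r..T, msup c r s := by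
      have e1 : (∫ s in r..T, msup c r (s - r)) = ∫ s in (r - r)..(T - r), msup c r s :=
        intervalIntegral.integral_comp_sub_right (msup c r) r
      have hmono : (∫ s in (0:ℝ)..(T - r), msup c r s) ≤ ∫ s in (0:ℝ)..T, msup c r s :=
        intervalIntegral.integral_mono_interval le_rfl (by linarith) (by linarith)
          (ae_of_all _ (fun s => hp0 s)) (hmsccont.intervalIntegrable 0 T)
      have esplit : (∫ s in (0:ℝ)..T, msup c r s) = C₀ + ∫ s in r..T, msup c r s := by
        rw [hC0def]
        exact (intervalIntegral.integral_add_adjacent_intervals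
          (hmsccont.intervalIntegrable 0 r) (hmsccont.intervalIntegrable r T)).symm
      rw [e1, sub_self]
      linarith
    have hBstep3 := mul_le_mul_of_nonneg_left step3 hB
    linarith
  -- the three tendsto facts
  have htA : Tendsto (fun T : ℝ => (1 / T) * ∫ s in r..T, msup q r s) atTop (nhds 0) := by
    refine Tendsto.congr' ?_ (hFP L hL)
    filter_upwards [eventually_ge_atTop r] with T hT
    congr 1
    refine intervalIntegral.integral_congr (fun s hs => ?_)
    rw [uIcc_of_le hT] at hs
    exact hAeq s hs.1
  have htc : Tendsto (fun T : ℝ => (1 / T) * ∫ s in r..T, msup c r s) atTop (nhds 0) := by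
    refine Tendsto.congr' ?_ huP
    filter_upwards [eventually_ge_atTop r] with T hT
    congr 1
    refine intervalIntegral.integral_congr (fun s hs => ?_)
    rw [uIcc_of_le hT] at hs
    exact hceq s hs.1
  have htC0 : Tendsto (fun T : ℝ => B * C₀ * (1 / T)) atTop (nhds 0) := by
    have h := tendsto_inv_atTop_zero.const_mul (B * C₀)
    simp only [mul_zero] at h
    simpa [one_div] using h
  set U : ℝ → ℝ := fun T => (1 / T) * (∫ s in r..T, msup q r s)
      + B * ((1 / T) * ∫ s in r..T, msup c r s)
      + (B * C₀ * (1 / T) + B * ((1 / T) * ∫ s in r..T, msup c r s)) with hUdef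
  have htU : Tendsto U atTop (nhds 0) := by
    have h := (htA.add (htc.const_mul B)).add (htC0.add (htc.const_mul B))
    have e : (0:ℝ) + B * 0 + (0 + B * 0) = 0 := by ring
    rw [e] at h
    exact h
  show Tendsto (fun T : ℝ => (1 / T) * ∫ s in r..T,
      ⨆ τ ∈ Set.Icc (s - r) s, ‖F (τ + ω) (hist r u (τ + ω)) - F τ (hist r u τ)‖)
    atTop (nhds 0)
  refine tendsto_of_tendsto_of_tendsto_of_le_of_le' tendsto_const_nhds htU ?_ ?_
  · filter_upwards [eventually_ge_atTop r, eventually_gt_atTop (0:ℝ)] with T hT hT0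
    refine mul_nonneg (one_div_nonneg.2 hT0.le) ?_
    refine intervalIntegral.integral_nonneg hT (fun s hs => ?_)
    rw [hG0eq s hs.1]
    exact hmsPhi0 s
  · filter_upwards [eventually_ge_atTop r, eventually_gt_atTop (0:ℝ)] with T hT hT0
    have hIeq : (∫ s in r..T,
        ⨆ τ ∈ Set.Icc (s - r) s, ‖F (τ + ω) (hist r u (τ + ω)) - F τ (hist r u τ)‖)
        = ∫ s in r..T, msup Φ r s := by
      refine intervalIntegral.integral_congr (fun s hs => ?_)
      rw [uIcc_of_le hT] at hs
      exact hG0eq s hs.1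
    rw [hIeq]
    have h1T : (0:ℝ) ≤ 1 / T := one_div_nonneg.2 hT0.le
    have h2 : (1 / T) * ((∫ s in r..T, msup q r s) + B * (∫ s in r..T, msup c r s)
        + B * (C₀ + ∫ s in r..T, msup c r s)) = U T := by
      simp only [hUdef]
      ring
    exact le_trans (mul_le_mul_of_nonneg_left (hIbound T hT) h1T) (le_of_eq h2)
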